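/- Let R be a commutative ring, M a finitely generated projective R-module, and L ⊆ M a submodule which is a direct summand of M and is projective of rank 1 (its localization at every prime ideal of R is free of rank 1). Let g : M → M/L be the quotient map and s ≥ 1. Then the kernel of the induced map Λ^sg : Λ^sM → Λ^s(M/L) equals the submodule L∧Λ^{s-1}M of Λ^sM generated by all elements ℓ ∧ ω with ℓ ∈ L and ω ∈ Λ^{s-1}M, and this kernel is isomorphic as an R-module to L ⊗_R Λ^{s-1}(M/L). -/

import Mathlib

open ExteriorAlgebra

/-- A module is finitely generated projective of rank `n` if it is finitely generated,
projective, and its localization at every prime ideal of `R` is free of rank `n`. -/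
def IsFGProjOfRank (R : Type*) [CommRing R] (M : Type*) [AddCommGroup M] [Module R M]
    (n : ℕ) : Prop :=
  Module.Finite R M ∧ Module.Projective R M ∧
    ∀ (P : Ideal R) [P.IsPrime],
      Module.Free (Localization.AtPrime P) (LocalizedModule P.primeCompl M) ∧
      Module.finrank (Localization.AtPrime P) (LocalizedModule P.primeCompl M) = n

section AuxLemmas

open TensorProduct

variable {R : Type*} [CommRing R] {M : Type*} [AddCommGroup M] [Module R M]
  {N : Type*} [AddCommGroup N] [Module R N]
  {Q : Type*} [AddCommGroup Q] [Module R Q] {P : Type*} [AddCommGroup P] [Module R P]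

private lemma aux_rankone_symm {V : Type*} [AddCommGroup V] [Module R V]
    (hV : IsFGProjOfRank R V 1) (f g : V →ₗ[R] R) (a b : V) : f a * g b = g a * f b := by
  set d := f a * g b - g a * f b with hd
  have key : ∀ (P : Ideal R), P.IsMaximal → ∃ u ∉ P, u * d = 0 := by
    intro P hP
    haveI := hP.isPrime
    obtain ⟨hfree, hrank⟩ := hV.2.2 P
    set A := Localization.AtPrime P with hA
    set VP := LocalizedModule P.primeCompl V with hVP
    haveI : Module.Finite A VP := Module.finite_of_finrank_eq_succ (by rw [hrank])
    let e : Module.Basis (Fin 1) A VP := Module.finBasisOfFinrankEq A VP hrank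
    obtain ⟨m0, s0, he0⟩ : ∃ m0 s0, e 0 = LocalizedModule.mk m0 s0 :=
      LocalizedModule.induction_on
        (β := fun x => ∃ m0 s0, x = LocalizedModule.mk m0 s0)
        (fun m s => ⟨m, s, rfl⟩) (e 0)
    have hrepr : ∀ x : VP, (e.repr x 0) • e 0 = x := by
      intro x
      conv_rhs => rw [← e.sum_repr x]
      rw [Fin.sum_univ_one]
    have getrel : ∀ x : V, ∃ (α : P.primeCompl) (ρ : R), (α : R) • x = ρ • m0 := by
      intro x
      obtain ⟨r, t, hc⟩ : ∃ r t, e.repr (LocalizedModule.mk x 1) 0 = Localization.mk r t :=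
        Localization.induction_on
          (p := fun c => ∃ r t, c = Localization.mk r t)
          (e.repr (LocalizedModule.mk x 1) 0) (fun y => ⟨y.1, y.2, rfl⟩)
      have h1 : LocalizedModule.mk x (1 : P.primeCompl) = LocalizedModule.mk (r • m0) (t * s0) := by
        conv_lhs => rw [← hrepr (LocalizedModule.mk x 1)]
        rw [hc, he0, LocalizedModule.mk_smul_mk]
      obtain ⟨u, hu⟩ := LocalizedModule.mk_eq.mp h1
      refine ⟨u * (t * s0), (u : R) * r, ?_⟩
      simp only [Submonoid.smul_def, one_smul, Submonoid.coe_mul, smul_smul,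
        OneMemClass.coe_one, one_mul] at hu ⊢
      exact hu
    obtain ⟨α, ρa, ha⟩ := getrel a
    obtain ⟨β, ρb, hb⟩ := getrel b
    refine ⟨(α : R) * (β : R), mul_mem α.2 β.2, ?_⟩
    have h1 : (α : R) * f a = ρa * f m0 := by
      have := congrArg f ha; simpa [smul_eq_mul] using this
    have h2 : (α : R) * g a = ρa * g m0 := by
      have := congrArg g ha; simpa [smul_eq_mul] using this
    have h3 : (β : R) * g b = ρb * g m0 := by
      have := congrArg g hb; simpa [smul_eq_mul] using this
    have h4 : (β : R) * f b = ρb * f m0 := by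
      have := congrArg f hb; simpa [smul_eq_mul] using this
    have expand : ((α : R) * (β : R)) * d
        = ((α : R) * f a) * ((β : R) * g b) - ((α : R) * g a) * ((β : R) * f b) := by
      rw [hd]; ring
    rw [expand, h1, h2, h3, h4]; ring
  by_contra hne
  have hne' : d ≠ 0 := sub_ne_zero.mpr hne
  have hIne : Ideal.torsionOf R R d ≠ ⊤ := fun h => hne' ((Ideal.torsionOf_eq_top_iff R d).mp h)
  obtain ⟨P, hmax, hle⟩ := Ideal.exists_le_maximal _ hIne
  obtain ⟨u, hu1, hu2⟩ := key P hmax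
  exact hu1 (hle (by rw [Ideal.mem_torsionOf_iff, smul_eq_mul]; exact hu2))

private lemma aux_symm_sum :
    ∀ (n : ℕ) (v : Fin n → M) (c : Fin n → Fin n → R), (∀ i j, c i j = c j i) →
      ∑ i, ∑ j, c i j • (ι R (v i) * ι R (v j)) = 0 := by
  intro n
  induction n with
  | zero => intro v c _; simp
  | succ n ih =>
    intro v c hc
    simp only [Fin.sum_univ_castSucc]
    rw [Finset.sum_add_distrib]
    have h1 : ∑ i : Fin n, ∑ j : Fin n,
        c i.castSucc j.castSucc • (ι R (v i.castSucc) * ι R (v j.castSucc)) = 0 :=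
      ih (fun i => v i.castSucc) (fun i j => c i.castSucc j.castSucc)
        (fun i j => hc _ _)
    rw [h1, zero_add]
    rw [ι_sq_zero, smul_zero, add_zero]
    rw [← Finset.sum_add_distrib]
    refine Finset.sum_eq_zero fun i _ => ?_
    rw [hc (Fin.last n) i.castSucc]
    rw [← smul_add, ι_add_mul_swap, smul_zero]

private lemma aux_ll_zero {L : Submodule R M} (hL : IsFGProjOfRank R ↥L 1) (a b : ↥L) :
    ι R (a : M) * ι R (b : M) = 0 := by
  haveI : Module.Finite R ↥L := hL.1
  haveI : Module.Projective R ↥L := hL.2.1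
  obtain ⟨n, F, G, hsurj, hinj, hFG⟩ := Module.Finite.exists_comp_eq_id_of_projective R ↥L
  have expand : ∀ x : ↥L, (x : M) = ∑ i : Fin n, G x i • ((F (Pi.single i 1) : ↥L) : M) := by
    intro x
    have h1 : F (G x) = x := by
      have := congrArg (fun φ => φ x) hFG
      simpa using this
    have h2 : G x = ∑ i : Fin n, G x i • (Pi.single i (1 : R) : Fin n → R) := by
      rw [← Finset.univ_sum_single (G x)]
      refine Finset.sum_congr rfl fun i _ => ?_
      rw [← Pi.single_smul, smul_eq_mul, mul_one]
      simp
    conv_lhs => rw [← h1, h2]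
    rw [map_sum]
    push_cast [Submodule.coe_sum]
    refine Finset.sum_congr rfl fun i _ => ?_
    rw [map_smul]
    simp
  have ha := expand a
  have hb := expand b
  rw [ha, hb, map_sum, map_sum, Finset.sum_mul_sum]
  have hterm : ∀ (i j : Fin n),
      (ι R (G a i • ((F (Pi.single i 1) : ↥L) : M)))
        * (ι R (G b j • ((F (Pi.single j 1) : ↥L) : M)))
      = (G a i * G b j) •
        (ι R ((F (Pi.single i 1) : ↥L) : M) * ι R ((F (Pi.single j 1) : ↥L) : M)) := by
    intro i j
    rw [map_smul, map_smul, smul_mul_assoc, mul_smul_comm, smul_smul]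
  simp only [hterm]
  refine aux_symm_sum n (fun i => ((F (Pi.single i 1) : ↥L) : M)) (fun i j => G a i * G b j) ?_
  intro i j
  exact aux_rankone_symm hL ((LinearMap.proj i) ∘ₗ G) ((LinearMap.proj j) ∘ₗ G) a b

private lemma aux_map_mem_pow (g : M →ₗ[R] N) :
    ∀ (k : ℕ) (x : ExteriorAlgebra R M),
      x ∈ (LinearMap.range (ι R : M →ₗ[R] ExteriorAlgebra R M)) ^ k →
      ExteriorAlgebra.map g x ∈ (LinearMap.range (ι R : N →ₗ[R] ExteriorAlgebra R N)) ^ k := by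
  intro k
  induction k with
  | zero =>
    intro x hx
    rw [pow_zero] at hx ⊢
    obtain ⟨r, hr⟩ := Submodule.mem_one.mp hx
    rw [← hr, AlgHom.commutes]
    exact Submodule.algebraMap_mem r
  | succ k ih =>
    intro x hx
    rw [pow_succ'] at hx ⊢
    refine Submodule.mul_induction_on hx ?_ ?_
    · rintro m ⟨u, rfl⟩ y hy
      rw [map_mul, map_apply_ι]
      exact Submodule.mul_mem_mul (LinearMap.mem_range_self _ _) (ih y hy)
    · intro a b ha hb
      rw [map_add]
      exact add_mem ha hb

private lemma aux_lmul_mem (L : Submodule R M) (T : Submodule R (ExteriorAlgebra R M)) (m : M) :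
    ∀ z ∈ (LinearMap.range (ι R ∘ₗ L.subtype)) * T,
      ι R m * z ∈ (LinearMap.range (ι R ∘ₗ L.subtype)) *
        ((LinearMap.range (ι R : M →ₗ[R] ExteriorAlgebra R M)) * T) := by
  intro z hz
  refine Submodule.mul_induction_on hz ?_ ?_
  · rintro a ⟨ℓ, rfl⟩ t ht
    have hswap : ι R m * ((ι R ∘ₗ L.subtype) ℓ) = -(((ι R ∘ₗ L.subtype) ℓ) * ι R m) := by
      simp only [LinearMap.coe_comp, Function.comp_apply, Submodule.coe_subtype]
      exact eq_neg_of_add_eq_zero_left (ι_add_mul_swap m (ℓ : M))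
    have heq : ι R m * ((ι R ∘ₗ L.subtype) ℓ * t)
        = -((ι R ∘ₗ L.subtype) ℓ * (ι R m * t)) := by
      rw [← mul_assoc, ← mul_assoc, hswap, neg_mul]
    rw [heq]
    exact neg_mem (Submodule.mul_mem_mul (LinearMap.mem_range_self _ ℓ)
      (Submodule.mul_mem_mul (LinearMap.mem_range_self _ m) ht))
  · intro a b ha hb
    rw [mul_add]
    exact add_mem ha hb

private lemma aux_sub_map_mem (L : Submodule R M) (f : M →ₗ[R] M) (hf : ∀ m, m - f m ∈ L) :
    ∀ (k : ℕ) (x : ExteriorAlgebra R M),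
      x ∈ (LinearMap.range (ι R : M →ₗ[R] ExteriorAlgebra R M)) ^ (k + 1) →
      x - ExteriorAlgebra.map f x ∈ (LinearMap.range (ι R ∘ₗ L.subtype)) *
        (LinearMap.range (ι R : M →ₗ[R] ExteriorAlgebra R M)) ^ k := by
  intro k
  induction k with
  | zero =>
    intro x hx
    rw [pow_one] at hx
    obtain ⟨m, rfl⟩ := hx
    rw [map_apply_ι, ← map_sub, pow_zero, Submodule.mul_one]
    exact ⟨⟨m - f m, hf m⟩, rfl⟩
  | succ k ih =>
    intro x hx
    rw [pow_succ'] at hx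
    refine Submodule.mul_induction_on hx ?_ ?_
    · rintro a ⟨m, rfl⟩ y hy
      have key : ι R m * y - ExteriorAlgebra.map f (ι R m * y)
          = ι R (m - f m) * y + ι R (f m) * (y - ExteriorAlgebra.map f y) := by
        rw [map_mul, map_apply_ι, map_sub, sub_mul, mul_sub]
        abel
      rw [key]
      refine add_mem ?_ ?_
      · exact Submodule.mul_mem_mul ⟨⟨m - f m, hf m⟩, rfl⟩ hy
      · have h2 := aux_lmul_mem L ((LinearMap.range (ι R : M →ₗ[R] ExteriorAlgebra R M)) ^ k)
          (f m) _ (ih y hy)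
        rwa [← pow_succ'] at h2
    · intro a b ha hb
      have : a + b - ExteriorAlgebra.map f (a + b)
          = (a - ExteriorAlgebra.map f a) + (b - ExteriorAlgebra.map f b) := by
        rw [map_add]; abel
      rw [this]
      exact add_mem ha hb

private lemma aux_mulLeft_add {A : Type*} [Ring A] [Algebra R A] (a b : A) :
    LinearMap.mulLeft R (a + b) = LinearMap.mulLeft R a + LinearMap.mulLeft R b :=
  LinearMap.ext fun x => add_mul a b x

private lemma aux_mulLeft_smul {A : Type*} [Ring A] [Algebra R A] (r : R) (a : A) :
    LinearMap.mulLeft R (r • a) = r • LinearMap.mulLeft R a :=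
  LinearMap.ext fun x => smul_mul_assoc r a x

private noncomputable def auxRho (q : M →ₗ[R] Q) (p : M →ₗ[R] P) :
    M →ₗ[R] Module.End R (ExteriorAlgebra R Q × (P ⊗[R] ExteriorAlgebra R Q)) where
  toFun m := LinearMap.prod
    ((LinearMap.mulLeft R (ι R (q m))) ∘ₗ LinearMap.fst R _ _)
    (((TensorProduct.mk R P (ExteriorAlgebra R Q)) (p m)) ∘ₗ LinearMap.fst R _ _
      - (LinearMap.lTensor P (LinearMap.mulLeft R (ι R (q m)))) ∘ₗ LinearMap.snd R _ _)
  map_add' m m' := by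
    refine LinearMap.ext fun x => ?_
    simp only [map_add, aux_mulLeft_add, LinearMap.lTensor_add, LinearMap.prod_apply,
      LinearMap.coe_comp, Function.comp_apply, LinearMap.add_apply, LinearMap.sub_apply,
      Function.prod_apply, LinearMap.fst_apply, LinearMap.snd_apply, TensorProduct.mk_apply,
      TensorProduct.add_tmul, Prod.mk_add_mk]
    exact Prod.ext_iff.mpr ⟨rfl, by abel⟩
  map_smul' r m := by
    refine LinearMap.ext fun x => ?_
    simp only [map_smul, aux_mulLeft_smul, LinearMap.lTensor_smul, LinearMap.prod_apply,
      LinearMap.coe_comp, Function.comp_apply, LinearMap.smul_apply, LinearMap.sub_apply,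
      Function.prod_apply, LinearMap.fst_apply, LinearMap.snd_apply, TensorProduct.mk_apply,
      TensorProduct.smul_tmul', RingHom.id_apply, Prod.smul_mk, smul_sub]

private lemma auxRho_sq (q : M →ₗ[R] Q) (p : M →ₗ[R] P) (m : M) :
    auxRho q p m * auxRho q p m = 0 := by
  refine LinearMap.ext fun x => ?_
  simp only [Module.End.mul_apply, auxRho, LinearMap.coe_mk, AddHom.coe_mk,
    LinearMap.prod_apply, LinearMap.coe_comp, Function.comp_apply, Function.prod_apply,
    LinearMap.fst_apply, LinearMap.snd_apply, LinearMap.sub_apply, TensorProduct.mk_apply,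
    LinearMap.zero_apply]
  refine Prod.ext_iff.mpr ⟨?_, ?_⟩
  · simp only [Prod.fst_zero, LinearMap.mulLeft_apply, ← mul_assoc, ι_sq_zero, zero_mul]
  · simp only [map_sub, LinearMap.mulLeft_apply]
    have h1 : (LinearMap.lTensor P (LinearMap.mulLeft R (ι R (q m))))
        ((LinearMap.lTensor P (LinearMap.mulLeft R (ι R (q m)))) x.2)
        = (LinearMap.lTensor P
            (LinearMap.mulLeft R (ι R (q m)) ∘ₗ LinearMap.mulLeft R (ι R (q m)))) x.2 := by
      rw [LinearMap.lTensor_comp, LinearMap.coe_comp, Function.comp_apply]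
    have h2 : LinearMap.mulLeft R (ι R (q m)) ∘ₗ LinearMap.mulLeft R (ι R (q m))
        = (0 : ExteriorAlgebra R Q →ₗ[R] ExteriorAlgebra R Q) := by
      rw [← LinearMap.mulLeft_mul, ι_sq_zero]
      exact LinearMap.mulLeft_zero_eq_zero _ _
    rw [LinearMap.lTensor_tmul]
    simp only [LinearMap.mulLeft_apply]
    rw [h1, h2, LinearMap.lTensor_zero]
    simp

private noncomputable def auxXi (q : M →ₗ[R] Q) (p : M →ₗ[R] P) :
    ExteriorAlgebra R M →ₐ[R] Module.End R (ExteriorAlgebra R Q × (P ⊗[R] ExteriorAlgebra R Q)) :=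
  ExteriorAlgebra.lift R ⟨auxRho q p, fun m => auxRho_sq q p m⟩

private lemma auxXi_ι (q : M →ₗ[R] Q) (p : M →ₗ[R] P) (m : M) :
    auxXi q p (ι R m) = auxRho q p m :=
  ExteriorAlgebra.lift_ι_apply _ _ _ m

private lemma auxRho_apply (q : M →ₗ[R] Q) (p : M →ₗ[R] P) (m : M)
    (ω : ExteriorAlgebra R Q) (t : P ⊗[R] ExteriorAlgebra R Q) :
    auxRho q p m (ω, t) = (ι R (q m) * ω,
      p m ⊗ₜ[R] ω - (LinearMap.lTensor P (LinearMap.mulLeft R (ι R (q m)))) t) := rfl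

private lemma aux_key2 (q : M →ₗ[R] Q) (p : M →ₗ[R] P) (m : M) (hqm : q m = 0)
    (ω : ExteriorAlgebra R Q) :
    auxXi q p (ι R m) (ω, 0) = (0, p m ⊗ₜ[R] ω) := by
  rw [auxXi_ι, auxRho_apply, hqm]
  simp

private lemma aux_key1 {q : M →ₗ[R] Q} {p : M →ₗ[R] P} {σ : Q →ₗ[R] M}
    (hqσ : ∀ z, q (σ z) = z) (hpσ : ∀ z, p (σ z) = 0) :
    ∀ (k : ℕ) (v : ExteriorAlgebra R Q),
      v ∈ (LinearMap.range (ι R : Q →ₗ[R] ExteriorAlgebra R Q)) ^ k →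
      ∀ τ : ExteriorAlgebra R Q,
        auxXi q p (ExteriorAlgebra.map σ v) (τ, 0) = (v * τ, 0) := by
  intro k
  induction k with
  | zero =>
    intro v hv τ
    rw [pow_zero] at hv
    obtain ⟨r, hr⟩ := Submodule.mem_one.mp hv
    subst hr
    rw [AlgHom.commutes, AlgHom.commutes]
    rw [Module.algebraMap_end_apply]
    rw [Prod.smul_mk, smul_zero, Algebra.smul_def]
  | succ k ih =>
    intro v hv τ
    rw [pow_succ'] at hv
    refine Submodule.mul_induction_on hv ?_ ?_
    · rintro a ⟨w, rfl⟩ y hy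
      rw [map_mul, map_mul, Module.End.mul_apply, ih y hy τ, map_apply_ι, auxXi_ι,
        auxRho_apply, hqσ, hpσ]
      simp [mul_assoc]
    · intro a b ha hb
      rw [map_add, map_add, LinearMap.add_apply, ha, hb]
      rw [add_mul]
      simp [Prod.mk_add_mk]

end AuxLemmas

set_option maxHeartbeats 2000000 in
open TensorProduct in
/-- **dual Pascal's rule.** Let `M` be a finitely generated projective module
over a commutative ring `R`, `L ⊆ M` a direct summand which is projective of rank 1,
`g : M → M/L` the quotient map, and `s ≥ 1`.  Then the kernel of the induced map
`⋀^s g : ⋀^s M → ⋀^s (M/L)` equals the submodule `L ∧ ⋀^{s-1} M`, and this kernel is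
isomorphic to `L ⊗ ⋀^{s-1}(M/L)`. -/
theorem kernel_exteriorPower_quotient_map
    (R : Type*) [CommRing R] (M : Type*) [AddCommGroup M] [Module R M]
    [Module.Finite R M] [Module.Projective R M]
    (L : Submodule R M) (hsummand : ∃ L' : Submodule R M, IsCompl L L')
    (hL : IsFGProjOfRank R ↥L 1) (s : ℕ) (hs : 1 ≤ s)
    (ψ : ⋀[R]^s M →ₗ[R] ⋀[R]^s (M ⧸ L))
    (hψ : ∀ x : ⋀[R]^s M,
      (ψ x : ExteriorAlgebra R (M ⧸ L)) = ExteriorAlgebra.map L.mkQ (x : ExteriorAlgebra R M)) :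
    (∀ x : ⋀[R]^s M, ψ x = 0 ↔
      (x : ExteriorAlgebra R M) ∈
        LinearMap.range (ExteriorAlgebra.ι R ∘ₗ L.subtype) *
          (LinearMap.range (ExteriorAlgebra.ι R : M →ₗ[R] ExteriorAlgebra R M)) ^ (s - 1)) ∧
    Nonempty (↥(LinearMap.ker ψ) ≃ₗ[R] TensorProduct R ↥L ↥(⋀[R]^(s - 1) (M ⧸ L))) := by
  classical
  obtain ⟨L', hcompl⟩ := hsummand
  haveI : Module.Projective R ↥L := hL.2.1
  -- basic maps
  let prj : M →ₗ[R] ↥L := L.linearProjOfIsCompl L' hcompl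
  let eqv : (M ⧸ L) ≃ₗ[R] ↥L' := Submodule.quotientEquivOfIsCompl L L' hcompl
  let σ : (M ⧸ L) →ₗ[R] M := L'.subtype ∘ₗ (eqv : (M ⧸ L) →ₗ[R] ↥L')
  have hqσ : ∀ z, L.mkQ (σ z) = z := by
    intro z
    show L.mkQ (L'.subtype (eqv z)) = z
    rw [Submodule.mkQ_apply]
    exact Submodule.mk_quotientEquivOfIsCompl_apply hcompl z
  have hpσ : ∀ z, prj (σ z) = 0 := fun z =>
    Submodule.linearProjOfIsCompl_apply_right hcompl (eqv z)
  have hpL : ∀ ℓ : ↥L, prj (ℓ : M) = ℓ := fun ℓ =>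
    Submodule.linearProjOfIsCompl_apply_left hcompl ℓ
  set f : M →ₗ[R] M := σ ∘ₗ L.mkQ with hfdef
  have hf : ∀ m, m - f m ∈ L := by
    intro m
    have h : L.mkQ (m - f m) = 0 := by
      rw [map_sub]
      have : L.mkQ (f m) = L.mkQ m := hqσ (L.mkQ m)
      rw [this, sub_self]
    rwa [Submodule.mkQ_apply, Submodule.Quotient.mk_eq_zero] at h
  have hmkQι : ∀ ℓ : ↥L, L.mkQ (ℓ : M) = 0 := fun ℓ => by
    rw [Submodule.mkQ_apply, Submodule.Quotient.mk_eq_zero]; exact ℓ.2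
  have hmapf : ∀ x : ExteriorAlgebra R M,
      ExteriorAlgebra.map f x = ExteriorAlgebra.map σ (ExteriorAlgebra.map L.mkQ x) := by
    intro x
    rw [← AlgHom.comp_apply, map_comp_map]
  have hzero : ∀ x : ⋀[R]^s M, ψ x = 0 ↔
      ExteriorAlgebra.map L.mkQ (x : ExteriorAlgebra R M) = 0 := by
    intro x
    rw [show ExteriorAlgebra.map L.mkQ (x : ExteriorAlgebra R M)
        = ((ψ x : ⋀[R]^s (M ⧸ L)) : ExteriorAlgebra R (M ⧸ L)) from (hψ x).symm,
      ZeroMemClass.coe_eq_zero]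
  -- Part 1
  have hpart1 : ∀ x : ⋀[R]^s M, ψ x = 0 ↔
      (x : ExteriorAlgebra R M) ∈
        LinearMap.range (ι R ∘ₗ L.subtype) *
          (LinearMap.range (ι R : M →ₗ[R] ExteriorAlgebra R M)) ^ (s - 1) := by
    intro x
    rw [hzero x]
    constructor
    · intro h
      have hx : (x : ExteriorAlgebra R M) ∈
          (LinearMap.range (ι R : M →ₗ[R] ExteriorAlgebra R M)) ^ ((s - 1) + 1) := by
        have h2 := x.2
        rwa [Nat.sub_add_cancel hs]
      have h2 := aux_sub_map_mem L f hf (s - 1) (x : ExteriorAlgebra R M) hx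
      rwa [hmapf, h, map_zero, sub_zero] at h2
    · intro h
      refine Submodule.mul_induction_on h ?_ ?_
      · rintro a ⟨ℓ, rfl⟩ b _
        rw [map_mul]
        have : ExteriorAlgebra.map L.mkQ ((ι R ∘ₗ L.subtype) ℓ) = 0 := by
          simp only [LinearMap.coe_comp, Function.comp_apply, Submodule.coe_subtype]
          rw [map_apply_ι, hmkQι ℓ, map_zero]
        rw [this, zero_mul]
      · intro a b ha hb
        rw [map_add, ha, hb, add_zero]
  refine ⟨hpart1, ?_⟩
  -- Part 2
  have hll : ∀ a b : ↥L, ι R (a : M) * ι R (b : M) = 0 := fun a b => aux_ll_zero hL a b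
  -- the retraction Ψ
  let Ξ := auxXi (R := R) (M := M) (Q := M ⧸ L) (P := ↥L) L.mkQ prj
  let ev : Module.End R (ExteriorAlgebra R (M ⧸ L) × (↥L ⊗[R] ExteriorAlgebra R (M ⧸ L)))
      →ₗ[R] (ExteriorAlgebra R (M ⧸ L) × (↥L ⊗[R] ExteriorAlgebra R (M ⧸ L))) :=
    LinearMap.applyₗ ((1 : ExteriorAlgebra R (M ⧸ L)), (0 : ↥L ⊗[R] ExteriorAlgebra R (M ⧸ L)))
  let Ψ : ExteriorAlgebra R M →ₗ[R] (↥L ⊗[R] ExteriorAlgebra R (M ⧸ L)) :=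
    (LinearMap.snd R _ _) ∘ₗ ev ∘ₗ Ξ.toLinearMap
  have hΨ : ∀ x : ExteriorAlgebra R M, Ψ x = (Ξ x (1, 0)).2 := fun x => rfl
  -- the injection Φ
  have hmul_pow : (LinearMap.range (ι R : M →ₗ[R] ExteriorAlgebra R M))
      * (LinearMap.range (ι R : M →ₗ[R] ExteriorAlgebra R M)) ^ (s - 1)
      = (LinearMap.range (ι R : M →ₗ[R] ExteriorAlgebra R M)) ^ s := by
    rw [← pow_succ']
    congr 1
    omega
  have hmem : ∀ (ℓ : ↥L) (ω : ⋀[R]^(s - 1) (M ⧸ L)),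
      ι R (ℓ : M) * ExteriorAlgebra.map σ (ω : ExteriorAlgebra R (M ⧸ L)) ∈ ⋀[R]^s M := by
    intro ℓ ω
    have h1 : ExteriorAlgebra.map σ (ω : ExteriorAlgebra R (M ⧸ L)) ∈
        (LinearMap.range (ι R : M →ₗ[R] ExteriorAlgebra R M)) ^ (s - 1) :=
      aux_map_mem_pow σ (s - 1) _ ω.2
    have h2 := Submodule.mul_mem_mul (LinearMap.mem_range_self (ι R) (ℓ : M)) h1
    rwa [hmul_pow] at h2
  let B : ↥L →ₗ[R] ↥(⋀[R]^(s - 1) (M ⧸ L)) →ₗ[R] ↥(⋀[R]^s M) :=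
    LinearMap.mk₂ R
      (fun ℓ ω => (⟨ι R (ℓ : M) * ExteriorAlgebra.map σ (ω : ExteriorAlgebra R (M ⧸ L)),
        hmem ℓ ω⟩ : ↥(⋀[R]^s M)))
      (fun ℓ ℓ' ω => Subtype.ext (by
        show ι R ((ℓ + ℓ' : ↥L) : M) * ExteriorAlgebra.map σ (ω : ExteriorAlgebra R (M ⧸ L))
          = ι R (ℓ : M) * ExteriorAlgebra.map σ (ω : ExteriorAlgebra R (M ⧸ L))
            + ι R (ℓ' : M) * ExteriorAlgebra.map σ (ω : ExteriorAlgebra R (M ⧸ L))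
        rw [Submodule.coe_add, map_add, add_mul]))
      (fun c ℓ ω => Subtype.ext (by
        show ι R ((c • ℓ : ↥L) : M) * ExteriorAlgebra.map σ (ω : ExteriorAlgebra R (M ⧸ L))
          = c • (ι R (ℓ : M) * ExteriorAlgebra.map σ (ω : ExteriorAlgebra R (M ⧸ L)))
        rw [Submodule.coe_smul, map_smul, smul_mul_assoc]))
      (fun ℓ ω ω' => Subtype.ext (by
        show ι R (ℓ : M) * ExteriorAlgebra.map σ ((ω + ω' : ↥(⋀[R]^(s - 1) (M ⧸ L)))
            : ExteriorAlgebra R (M ⧸ L))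
          = ι R (ℓ : M) * ExteriorAlgebra.map σ (ω : ExteriorAlgebra R (M ⧸ L))
            + ι R (ℓ : M) * ExteriorAlgebra.map σ (ω' : ExteriorAlgebra R (M ⧸ L))
        rw [Submodule.coe_add, map_add, mul_add]))
      (fun c ℓ ω => Subtype.ext (by
        show ι R (ℓ : M) * ExteriorAlgebra.map σ ((c • ω : ↥(⋀[R]^(s - 1) (M ⧸ L)))
            : ExteriorAlgebra R (M ⧸ L))
          = c • (ι R (ℓ : M) * ExteriorAlgebra.map σ (ω : ExteriorAlgebra R (M ⧸ L)))
        rw [Submodule.coe_smul, map_smul, mul_smul_comm]))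
  let Φ := TensorProduct.lift B
  have hΦcoe : ∀ (ℓ : ↥L) (ω : ↥(⋀[R]^(s - 1) (M ⧸ L))),
      ((Φ (ℓ ⊗ₜ ω) : ↥(⋀[R]^s M)) : ExteriorAlgebra R M)
        = ι R (ℓ : M) * ExteriorAlgebra.map σ (ω : ExteriorAlgebra R (M ⧸ L)) := by
    intro ℓ ω
    simp only [Φ, TensorProduct.lift.tmul, B, LinearMap.mk₂_apply]
  -- injectivity of Φ
  have hC : ∀ (ℓ : ↥L) (ω : ↥(⋀[R]^(s - 1) (M ⧸ L))),
      Ψ ((Φ (ℓ ⊗ₜ ω) : ↥(⋀[R]^s M)) : ExteriorAlgebra R M)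
        = ℓ ⊗ₜ (ω : ExteriorAlgebra R (M ⧸ L)) := by
    intro ℓ ω
    rw [hΦcoe]
    show (Ξ (ι R (ℓ : M) * ExteriorAlgebra.map σ (ω : ExteriorAlgebra R (M ⧸ L))) (1, 0)).2
      = ℓ ⊗ₜ (ω : ExteriorAlgebra R (M ⧸ L))
    rw [map_mul, Module.End.mul_apply]
    rw [aux_key1 hqσ hpσ (s - 1) (ω : ExteriorAlgebra R (M ⧸ L)) ω.2 1]
    rw [aux_key2 L.mkQ prj (ℓ : M) (hmkQι ℓ) _]
    rw [hpL, mul_one]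
  have hinj : Function.Injective Φ := by
    have hsub : Function.Injective ((⋀[R]^(s - 1) (M ⧸ L)).subtype) :=
      Submodule.injective_subtype _
    have hinj2 : Function.Injective
        (LinearMap.lTensor ↥L ((⋀[R]^(s - 1) (M ⧸ L)).subtype)) :=
      Module.Flat.lTensor_preserves_injective_linearMap _ hsub
    have hfactor : ∀ t, (LinearMap.lTensor ↥L ((⋀[R]^(s - 1) (M ⧸ L)).subtype)) t
        = Ψ ((Φ t : ↥(⋀[R]^s M)) : ExteriorAlgebra R M) := by
      intro t
      induction t using TensorProduct.induction_on with
      | zero => simp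
      | tmul ℓ ω =>
        rw [LinearMap.lTensor_tmul, hC ℓ ω]
        rfl
      | add x y hx hy =>
        rw [map_add, hx, hy, map_add, Submodule.coe_add, map_add]
    intro x y hxy
    apply hinj2
    rw [hfactor, hfactor, hxy]
  -- range Φ = ker ψ
  have hWle : LinearMap.range (ι R ∘ₗ L.subtype) *
      (LinearMap.range (ι R : M →ₗ[R] ExteriorAlgebra R M)) ^ (s - 1)
      ≤ LinearMap.range ((⋀[R]^s M).subtype ∘ₗ Φ) := by
    rw [Submodule.mul_le]
    rintro a ⟨ℓ, rfl⟩ v hv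
    have hkill : ∀ z ∈ LinearMap.range (ι R ∘ₗ L.subtype) *
        (LinearMap.range (ι R : M →ₗ[R] ExteriorAlgebra R M)) ^ (s - 1 - 1),
        ι R (ℓ : M) * z = 0 := by
      intro z hz
      refine Submodule.mul_induction_on hz ?_ ?_
      · rintro a' ⟨ℓ', rfl⟩ w _
        have : (ι R ∘ₗ L.subtype) ℓ' = ι R (ℓ' : M) := rfl
        rw [this, ← mul_assoc, hll ℓ ℓ', zero_mul]
      · intro u w hu hw
        rw [mul_add, hu, hw, add_zero]
    have hsplit : ι R (ℓ : M) * v = ι R (ℓ : M) * ExteriorAlgebra.map f v := by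
      rcases Nat.eq_zero_or_pos (s - 1) with h0 | hpos
      · rw [h0, pow_zero] at hv
        obtain ⟨r, hr⟩ := Submodule.mem_one.mp hv
        rw [← hr, AlgHom.commutes]
      · obtain ⟨k, hk⟩ : ∃ k, s - 1 = k + 1 := ⟨s - 1 - 1, by omega⟩
        have h2 := aux_sub_map_mem L f hf k v (by rwa [← hk])
        have h3 : ι R (ℓ : M) * (v - ExteriorAlgebra.map f v) = 0 :=
          hkill _ (by rwa [show s - 1 - 1 = k by omega])
        rw [mul_sub, sub_eq_zero] at h3
        exact h3
    have hω : ExteriorAlgebra.map L.mkQ v ∈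
        (LinearMap.range (ι R : (M ⧸ L) →ₗ[R] ExteriorAlgebra R (M ⧸ L))) ^ (s - 1) :=
      aux_map_mem_pow L.mkQ (s - 1) v hv
    refine ⟨ℓ ⊗ₜ ⟨ExteriorAlgebra.map L.mkQ v, hω⟩, ?_⟩
    show ((Φ (ℓ ⊗ₜ ⟨ExteriorAlgebra.map L.mkQ v, hω⟩) : ↥(⋀[R]^s M)) : ExteriorAlgebra R M)
      = (ι R ∘ₗ L.subtype) ℓ * v
    rw [hΦcoe]
    show ι R (ℓ : M) * ExteriorAlgebra.map σ (ExteriorAlgebra.map L.mkQ v)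
      = ι R (ℓ : M) * v
    rw [← hmapf, ← hsplit]
  have hrange : LinearMap.range Φ = LinearMap.ker ψ := by
    apply le_antisymm
    · rintro _ ⟨t, rfl⟩
      rw [LinearMap.mem_ker]
      have hz : ∀ t, ExteriorAlgebra.map L.mkQ ((Φ t : ↥(⋀[R]^s M)) : ExteriorAlgebra R M) = 0 := by
        intro t
        induction t using TensorProduct.induction_on with
        | zero => simp
        | tmul ℓ ω =>
          rw [hΦcoe, map_mul]
          rw [show ExteriorAlgebra.map L.mkQ (ι R (ℓ : M)) = 0 by
            rw [map_apply_ι, hmkQι ℓ, map_zero]]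
          rw [zero_mul]
        | add x y hx hy =>
          rw [map_add, Submodule.coe_add, map_add, hx, hy, add_zero]
      exact (hzero _).mpr (hz t)
    · intro x hx
      have h1 := (hpart1 x).mp (LinearMap.mem_ker.mp hx)
      obtain ⟨t, ht⟩ := hWle h1
      refine ⟨t, Subtype.ext ?_⟩
      simpa using ht
  exact ⟨((LinearEquiv.ofInjective Φ hinj).trans (LinearEquiv.ofEq _ _ hrange)).symm⟩
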